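/- Let (r_n), (s_n) be sequences of integers and (q_n) a nondecreasing sequence of positive integers; set α_n = (r_n/q_n, s_n/q_n) ∈ ℝ². Assume for every n: |r_{n+1}/q_{n+1} − r_n/q_n| < 1/(2^{n+1} q_n) and |s_{n+1}/q_{n+1} − s_n/q_n| < 1/(2^{n+1} q_n), and the orbit {k·α_{n+1} mod ℤ² : k ∈ ℤ} of the rotation by α_{n+1} is (1/2^{n+1})-dense in T² = ℝ²/ℤ². Then the sequence (α_n) converges to some α ∈ ℝ², every orbit of the translation z ↦ z + α on T² is dense, and α is totally irrational, i.e. 1, α₁, α₂ are linearly independent over ℚ. -/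

import Mathlib

open Filter

lemma dist_coe_circle (u v : ℝ) :
    dist ((u:AddCircle (1:ℝ))) ((v:AddCircle (1:ℝ))) = |u - v - round (u - v)| := by
  rw [dist_eq_norm, ← AddCircle.coe_sub, AddCircle.norm_eq]
  norm_num

lemma dist_coe_circle_le (u v : ℝ) :
    dist ((u:AddCircle (1:ℝ))) ((v:AddCircle (1:ℝ))) ≤ |u - v| := by
  rw [dist_coe_circle]
  simpa using round_le (u - v) 0

lemma coe_circle_int (m : ℤ) : ((m : ℝ) : AddCircle (1:ℝ)) = 0 := by
  simp [AddCircle.coe_eq_zero_iff]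

lemma half_le_abs_half_add_int (t : ℤ) : (1:ℝ)/2 ≤ |(1:ℝ)/2 + (t:ℝ)| := by
  rcases le_or_gt 0 t with h | h
  · have h' : (0:ℝ) ≤ (t:ℝ) := by exact_mod_cast h
    rw [abs_of_nonneg (by linarith)]; linarith
  · have h' : (t:ℝ) ≤ -1 := by
      have : t ≤ -1 := by omega
      exact_mod_cast this
    rw [abs_of_nonpos (by linarith)]; linarith

lemma limit_bound (b : ℕ → ℝ) (q : ℕ → ℕ) (hq : ∀ n, 0 < q n) (hqmono : Monotone q)
    (hb : ∀ n, |b (n+1) - b n| < 1 / (2^(n+1) * (q n : ℝ)))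
    (L : ℝ) (hL : Tendsto b atTop (nhds L)) (n : ℕ) :
    |L - b n| ≤ 1 / (2^n * (q n : ℝ)) := by
  have hqn : (0:ℝ) < q n := by exact_mod_cast hq n
  have key : ∀ m, n ≤ m → |b m - b n| ≤ 1/(2^n * (q n:ℝ)) - 1/(2^m * (q n:ℝ)) := by
    intro m hm
    induction m, hm using Nat.le_induction with
    | base => simp
    | succ m hm ih =>
      have h1 := hb m
      have hqm : (q n : ℝ) ≤ q m := by exact_mod_cast hqmono hm
      have hqm0 : (0:ℝ) < q m := by exact_mod_cast hq m
      calc |b (m+1) - b n| ≤ |b (m+1) - b m| + |b m - b n| := abs_sub_le _ _ _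
        _ ≤ 1/(2^(m+1) * (q m:ℝ)) + (1/(2^n * (q n:ℝ)) - 1/(2^m * (q n:ℝ))) :=
            add_le_add h1.le ih
        _ ≤ 1/(2^(m+1) * (q n:ℝ)) + (1/(2^n * (q n:ℝ)) - 1/(2^m * (q n:ℝ))) := by gcongr
        _ = 1/(2^n * (q n:ℝ)) - 1/(2^(m+1) * (q n:ℝ)) := by
            rw [pow_succ]
            field_simp
            ring
  have key2 : ∀ m, n ≤ m → |b m - b n| ≤ 1/(2^n * (q n:ℝ)) := by
    intro m hm
    refine (key m hm).trans ?_
    have : (0:ℝ) ≤ 1/(2^m * (q n:ℝ)) := by positivity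
    linarith
  have htd : Tendsto (fun m => |b m - b n|) atTop (nhds |L - b n|) :=
    ((hL.sub tendsto_const_nhds).abs)
  exact le_of_tendsto htd (eventually_atTop.2 ⟨n, key2⟩)

/-- The projection from the plane to the torus `T² = ℝ²/ℤ²`. -/
noncomputable def torusProj (z : ℝ × ℝ) : AddCircle (1:ℝ) × AddCircle (1:ℝ) :=
  ((z.1 : AddCircle (1:ℝ)), (z.2 : AddCircle (1:ℝ)))

/-- If the rational rotation vectors `α n = (r n / q n, s n / q n)` satisfy the
fast-approximation estimates and the rotation by `α (n+1)` has `(1/2^(n+1))`-dense orbits,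
then `α n` converges to a limit `α` which is totally irrational and whose associated
torus translation is minimal. -/
theorem limit_rotation_totally_irrational
    (r s : ℕ → ℤ) (q : ℕ → ℕ) (hq : ∀ n, 0 < q n) (hqmono : Monotone q)
    (α : ℕ → ℝ × ℝ)
    (hα : ∀ n, α n = ((r n : ℝ) / (q n : ℝ), (s n : ℝ) / (q n : ℝ)))
    (hr : ∀ n, |(r (n+1) : ℝ) / (q (n+1) : ℝ) - (r n : ℝ) / (q n : ℝ)| < 1 / (2^(n+1) * (q n : ℝ)))
    (hs : ∀ n, |(s (n+1) : ℝ) / (q (n+1) : ℝ) - (s n : ℝ) / (q n : ℝ)| < 1 / (2^(n+1) * (q n : ℝ)))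
    (hdense : ∀ n, ∀ w : AddCircle (1:ℝ) × AddCircle (1:ℝ),
      ∃ k : ℤ, dist w (torusProj ((k : ℝ) • α (n+1))) ≤ 1 / 2^(n+1)) :
    ∃ a : ℝ × ℝ, Tendsto α atTop (nhds a) ∧
      (∀ z : AddCircle (1:ℝ) × AddCircle (1:ℝ),
        Dense {w | ∃ k : ℤ, w = z + torusProj ((k : ℝ) • a)}) ∧
      LinearIndependent ℚ ![(1 : ℝ), a.1, a.2] := by
  set β : ℕ → ℝ := fun n => (r n : ℝ) / (q n : ℝ) with hβ
  set γ : ℕ → ℝ := fun n => (s n : ℝ) / (q n : ℝ) with hγ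
  have hqpos : ∀ n, (0:ℝ) < q n := fun n => by exact_mod_cast hq n
  have hq1 : ∀ n, (1:ℝ) ≤ q n := fun n => by exact_mod_cast hq n
  -- Cauchy
  have hcauchy : CauchySeq α := by
    apply cauchySeq_of_le_geometric (r := 1/2) (C := 1/2) (by norm_num)
    intro n
    have hb : (1:ℝ)/(2^(n+1) * (q n:ℝ)) ≤ (1/2) * (1/2)^n := by
      have h1 : (1:ℝ)/(2^(n+1) * (q n:ℝ)) ≤ 1/2^(n+1) :=
        one_div_le_one_div_of_le (by positivity)
          (le_mul_of_one_le_right (by positivity) (hq1 n))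
      have h2 : (1:ℝ)/2^(n+1) = 1/2 * (1/2)^n := by
        rw [div_pow, one_pow, pow_succ]; ring
      rw [← h2]; exact h1
    rw [hα n, hα (n+1), Prod.dist_eq]
    apply max_le
    · rw [Real.dist_eq, abs_sub_comm]; exact (hr n).le.trans hb
    · rw [Real.dist_eq, abs_sub_comm]; exact (hs n).le.trans hb
  obtain ⟨a, ha⟩ := cauchySeq_tendsto_of_complete hcauchy
  have ha1 : Tendsto β atTop (nhds a.1) := by
    have := ((continuous_fst.tendsto a).comp ha)
    convert this using 1
    ext n; simp [hα n]; rfl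
  have ha2 : Tendsto γ atTop (nhds a.2) := by
    have := ((continuous_snd.tendsto a).comp ha)
    convert this using 1
    ext n; simp [hα n]; rfl
  have hA1 : ∀ n, |a.1 - β n| ≤ 1 / (2^n * (q n : ℝ)) :=
    limit_bound β q hq hqmono hr a.1 ha1
  have hA2 : ∀ n, |a.2 - γ n| ≤ 1 / (2^n * (q n : ℝ)) :=
    limit_bound γ q hq hqmono hs a.2 ha2
  refine ⟨a, ha, ?_, ?_⟩
  · -- density
    intro z
    rw [Metric.dense_iff]
    intro w ε hε
    obtain ⟨n, hn⟩ : ∃ n : ℕ, (1:ℝ)/2^n < ε := by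
      obtain ⟨n, hn⟩ := exists_pow_lt_of_lt_one hε (by norm_num : (1:ℝ)/2 < 1)
      exact ⟨n, by rwa [div_pow, one_pow] at hn⟩
    obtain ⟨k, hk⟩ := hdense n (w - z)
    set Q : ℤ := (q (n+1) : ℤ) with hQ
    have hQpos : (0:ℤ) < Q := by rw [hQ]; exact_mod_cast hq (n+1)
    set k' : ℤ := k % Q with hk'def
    have hk'0 : 0 ≤ k' := Int.emod_nonneg k (by omega)
    have hk'lt : k' < Q := Int.emod_lt_of_pos k hQpos
    have hq0 : (q (n+1):ℝ) ≠ 0 := ne_of_gt (hqpos (n+1))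
    have hdiff : ∀ t : ℤ, (k:ℝ) * ((t:ℝ)/(q (n+1):ℝ)) =
        (k':ℝ) * ((t:ℝ)/(q (n+1):ℝ)) + ((k / Q * t : ℤ):ℝ) := by
      intro t
      have hk2 : (k:ℝ) = (k':ℝ) + (Q:ℝ) * ((k / Q : ℤ):ℝ) := by
        have h3 : k = k % Q + Q * (k / Q) := (Int.emod_add_mul_ediv k Q).symm
        exact_mod_cast h3
      rw [hk2, hQ]
      push_cast
      field_simp
    have hsame : torusProj ((k:ℝ) • α (n+1)) = torusProj ((k':ℝ) • α (n+1)) := by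
      unfold torusProj
      rw [hα (n+1)]
      simp only [Prod.smul_mk, smul_eq_mul]
      refine Prod.ext ?_ ?_
      · show (((k:ℝ) * ((r (n+1):ℝ)/(q (n+1):ℝ)) : ℝ) : AddCircle (1:ℝ)) =
            (((k':ℝ) * ((r (n+1):ℝ)/(q (n+1):ℝ)) : ℝ) : AddCircle (1:ℝ))
        rw [hdiff (r (n+1)), AddCircle.coe_add, coe_circle_int, add_zero]
      · show (((k:ℝ) * ((s (n+1):ℝ)/(q (n+1):ℝ)) : ℝ) : AddCircle (1:ℝ)) =
            (((k':ℝ) * ((s (n+1):ℝ)/(q (n+1):ℝ)) : ℝ) : AddCircle (1:ℝ))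
        rw [hdiff (s (n+1)), AddCircle.coe_add, coe_circle_int, add_zero]
    have hk'le : |(k':ℝ)| ≤ (q (n+1):ℝ) := by
      rw [abs_of_nonneg (by exact_mod_cast hk'0)]
      have : (k':ℝ) < (Q:ℝ) := by exact_mod_cast hk'lt
      rw [hQ] at this
      push_cast at this
      linarith
    have hcoordbound : ∀ x y : ℝ, |x - y| ≤ 1/(2^(n+1) * (q (n+1):ℝ)) →
        dist (((k':ℝ)*x : ℝ) : AddCircle (1:ℝ)) (((k':ℝ)*y : ℝ) : AddCircle (1:ℝ)) ≤ 1/2^(n+1) := by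
      intro x y hxy
      refine (dist_coe_circle_le _ _).trans ?_
      rw [← mul_sub, abs_mul]
      calc |(k':ℝ)| * |x - y| ≤ (q (n+1):ℝ) * (1/(2^(n+1) * (q (n+1):ℝ))) := by
            apply mul_le_mul hk'le hxy (abs_nonneg _) (by positivity)
        _ = 1/2^(n+1) := by field_simp
    have hclose : dist (torusProj ((k':ℝ) • a)) (torusProj ((k':ℝ) • α (n+1))) ≤ 1/2^(n+1) := by
      rw [hα (n+1)]
      unfold torusProj
      simp only [Prod.smul_mk, Prod.smul_fst, Prod.smul_snd, smul_eq_mul]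
      rw [Prod.dist_eq]
      apply max_le
      · exact hcoordbound _ _ (by simpa [abs_sub_comm] using hA1 (n+1))
      · exact hcoordbound _ _ (by simpa [abs_sub_comm] using hA2 (n+1))
    refine ⟨z + torusProj ((k':ℝ) • a), ?_, ⟨k', rfl⟩⟩
    rw [Metric.mem_ball]
    have hdisteq : dist (z + torusProj ((k':ℝ) • a)) w = dist (w - z) (torusProj ((k':ℝ) • a)) := by
      rw [dist_comm, dist_eq_norm, dist_eq_norm]
      congr 1
      abel
    rw [hdisteq]
    calc dist (w - z) (torusProj ((k':ℝ) • a))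
        ≤ dist (w - z) (torusProj ((k':ℝ) • α (n+1))) +
            dist (torusProj ((k':ℝ) • α (n+1))) (torusProj ((k':ℝ) • a)) := dist_triangle _ _ _
      _ ≤ 1/2^(n+1) + 1/2^(n+1) := by
          apply add_le_add
          · rw [← hsame]; exact hk
          · rw [dist_comm]; exact hclose
      _ = 1/2^n := by rw [pow_succ]; ring
      _ < ε := hn
  · -- irrationality
    rw [Fintype.linearIndependent_iff]
    intro g hg
    simp only [Fin.sum_univ_three, Matrix.cons_val_zero, Matrix.cons_val_one, Matrix.head_cons,
      Matrix.cons_val_two, Matrix.tail_cons, Rat.smul_def, mul_one] at hg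
    -- hg : (g 0 : ℝ) + (g 1 : ℝ) * a.1 + (g 2 : ℝ) * a.2 = 0
    suffices hg12 : g 1 = 0 ∧ g 2 = 0 by
      intro i
      fin_cases i
      · have h0 : (g 0 : ℝ) = 0 := by
          rw [hg12.1, hg12.2] at hg
          simpa using hg
        exact_mod_cast h0
      · exact hg12.1
      · exact hg12.2
    by_contra hcon
    set B : ℤ := (g 1).num * ((g 0).den : ℤ) * ((g 2).den : ℤ) with hBdef
    set C : ℤ := (g 2).num * ((g 0).den : ℤ) * ((g 1).den : ℤ) with hCdef
    set A : ℤ := (g 0).num * ((g 1).den : ℤ) * ((g 2).den : ℤ) with hAdef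
    have hd0 : ((g 0).den:ℝ) ≠ 0 := Nat.cast_ne_zero.mpr (g 0).den_nz
    have hd1 : ((g 1).den:ℝ) ≠ 0 := Nat.cast_ne_zero.mpr (g 1).den_nz
    have hd2 : ((g 2).den:ℝ) ≠ 0 := Nat.cast_ne_zero.mpr (g 2).den_nz
    have hBC : B ≠ 0 ∨ C ≠ 0 := by
      rcases not_and_or.mp hcon with h1 | h2
      · left
        exact mul_ne_zero (mul_ne_zero (Rat.num_ne_zero.mpr h1)
          (Int.natCast_ne_zero.mpr (g 0).den_nz)) (Int.natCast_ne_zero.mpr (g 2).den_nz)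
      · right
        exact mul_ne_zero (mul_ne_zero (Rat.num_ne_zero.mpr h2)
          (Int.natCast_ne_zero.mpr (g 0).den_nz)) (Int.natCast_ne_zero.mpr (g 1).den_nz)
    have heq : (A:ℝ) + (B:ℝ)*a.1 + (C:ℝ)*a.2 = 0 := by
      simp only [Rat.cast_def] at hg
      field_simp at hg
      rw [hAdef, hBdef, hCdef]
      push_cast
      linear_combination hg
    set X : ℝ := |(B:ℝ)| + |(C:ℝ)| with hXdef
    have hX : (0:ℝ) < X := by
      rcases hBC with h | h
      · have : (0:ℝ) < |(B:ℝ)| := abs_pos.mpr (by exact_mod_cast h)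
        have : (0:ℝ) ≤ |(C:ℝ)| := abs_nonneg _
        rw [hXdef]; linarith
      · have : (0:ℝ) < |(C:ℝ)| := abs_pos.mpr (by exact_mod_cast h)
        have : (0:ℝ) ≤ |(B:ℝ)| := abs_nonneg _
        rw [hXdef]; linarith
    have hzero : ∀ n : ℕ, X / 2^n < 1 → B * r n + C * s n + A * (q n : ℤ) = 0 := by
      intro n hlt
      have hq0 : (q n : ℝ) ≠ 0 := ne_of_gt (hqpos n)
      have e1 : ((B * r n + C * s n + A * (q n:ℤ) : ℤ):ℝ)
          = (q n:ℝ) * ((B:ℝ)*(β n - a.1) + (C:ℝ)*(γ n - a.2)) := by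
        have hbn : β n = (r n:ℝ)/(q n:ℝ) := rfl
        have hgn : γ n = (s n:ℝ)/(q n:ℝ) := rfl
        rw [hbn, hgn]
        push_cast
        field_simp
        linear_combination (q n : ℝ) * heq
      have t1 : |(B:ℝ)*(β n - a.1) + (C:ℝ)*(γ n - a.2)|
          ≤ |(B:ℝ)| *(1/(2^n*(q n:ℝ))) + |(C:ℝ)| *(1/(2^n*(q n:ℝ))) := by
        refine (abs_add_le _ _).trans ?_
        rw [abs_mul, abs_mul]
        gcongr
        · simpa [abs_sub_comm] using hA1 n
        · simpa [abs_sub_comm] using hA2 n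
      have e2 : |((B * r n + C * s n + A * (q n:ℤ) : ℤ):ℝ)| ≤ X / 2^n := by
        rw [e1, abs_mul, abs_of_pos (hqpos n)]
        calc (q n:ℝ) * |(B:ℝ)*(β n - a.1) + (C:ℝ)*(γ n - a.2)|
            ≤ (q n:ℝ) * (X * (1/(2^n * (q n:ℝ)))) := by
              have t2 : |(B:ℝ) * (β n - a.1) + (C:ℝ) * (γ n - a.2)|
                  ≤ X * (1/(2^n * (q n:ℝ))) := by
                rw [hXdef, add_mul]; exact t1
              exact mul_le_mul_of_nonneg_left t2 (hqpos n).le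
          _ = X / 2^n := by field_simp
      have e3 : |((B * r n + C * s n + A * (q n:ℤ) : ℤ):ℝ)| < 1 := e2.trans_lt hlt
      rw [← Int.cast_abs] at e3
      have e4 : |B * r n + C * s n + A * (q n:ℤ)| < 1 := by exact_mod_cast e3
      have e5 := abs_lt.mp e4
      omega
    obtain ⟨n₀, hn₀⟩ : ∃ n₀ : ℕ, 2*X + 1 < 2^n₀ :=
      pow_unbounded_of_one_lt (2*X + 1) (by norm_num)
    have hpow : (2:ℝ)^n₀ ≤ 2^(n₀+1) := by
      rw [pow_succ]
      nlinarith [pow_pos (by norm_num : (0:ℝ) < 2) n₀]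
    have hZ : B * r (n₀+1) + C * s (n₀+1) + A * (q (n₀+1) : ℤ) = 0 := by
      apply hzero
      rw [div_lt_one (by positivity)]
      linarith
    obtain ⟨w₁, w₂, hw⟩ : ∃ w₁ w₂ : ℝ, (B:ℝ)*w₁ + (C:ℝ)*w₂ = 1/2 := by
      rcases hBC with h | h
      · have hB0 : (B:ℝ) ≠ 0 := by exact_mod_cast h
        exact ⟨1/(2*(B:ℝ)), 0, by field_simp; try ring⟩
      · have hC0 : (C:ℝ) ≠ 0 := by exact_mod_cast h
        exact ⟨0, 1/(2*(C:ℝ)), by field_simp; try ring⟩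
    obtain ⟨k, hk⟩ := hdense n₀ (torusProj (w₁, w₂))
    set v1 : ℝ := (k:ℝ) * ((r (n₀+1):ℝ)/(q (n₀+1):ℝ)) with hv1def
    set v2 : ℝ := (k:ℝ) * ((s (n₀+1):ℝ)/(q (n₀+1):ℝ)) with hv2def
    have hT : torusProj ((k:ℝ) • α (n₀+1)) = torusProj (v1, v2) := by
      rw [hα (n₀+1)]
      simp [torusProj, Prod.smul_mk, smul_eq_mul, hv1def, hv2def]
    have hq0 : (q (n₀+1) : ℝ) ≠ 0 := ne_of_gt (hqpos (n₀+1))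
    have hBv : (B:ℝ)*v1 + (C:ℝ)*v2 = -((k:ℝ)*(A:ℝ)) := by
      have hZ' : ((B:ℝ)*(r (n₀+1):ℝ) + (C:ℝ)*(s (n₀+1):ℝ) + (A:ℝ)*(q (n₀+1):ℝ)) = 0 := by
        exact_mod_cast congrArg (fun t : ℤ => (t:ℝ)) hZ
      rw [hv1def, hv2def]
      push_cast
      field_simp
      linear_combination (k:ℝ) * hZ'
    set m1 : ℤ := round (w₁ - v1) with hm1def
    set m2 : ℤ := round (w₂ - v2) with hm2def
    have hd1 : dist ((w₁:AddCircle (1:ℝ))) ((v1:AddCircle (1:ℝ))) = |w₁ - v1 - (m1:ℝ)| :=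
      dist_coe_circle _ _
    have hd2 : dist ((w₂:AddCircle (1:ℝ))) ((v2:AddCircle (1:ℝ))) = |w₂ - v2 - (m2:ℝ)| :=
      dist_coe_circle _ _
    set D : ℝ := dist (torusProj (w₁, w₂)) (torusProj (v1, v2)) with hDdef
    have hDeq : D = max (dist ((w₁:AddCircle (1:ℝ))) ((v1:AddCircle (1:ℝ))))
        (dist ((w₂:AddCircle (1:ℝ))) ((v2:AddCircle (1:ℝ)))) := by
      rw [hDdef, Prod.dist_eq]; rfl
    have hD1 : |w₁ - v1 - (m1:ℝ)| ≤ D := by rw [hDeq, ← hd1]; exact le_max_left _ _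
    have hD2 : |w₂ - v2 - (m2:ℝ)| ≤ D := by rw [hDeq, ← hd2]; exact le_max_right _ _
    have hsum : (B:ℝ)*(w₁ - v1 - (m1:ℝ)) + (C:ℝ)*(w₂ - v2 - (m2:ℝ))
        = 1/2 + ((k*A - B*m1 - C*m2 : ℤ):ℝ) := by
      push_cast
      linear_combination hw - hBv
    have h12 : (1:ℝ)/2 ≤ |(B:ℝ)*(w₁-v1-(m1:ℝ)) + (C:ℝ)*(w₂-v2-(m2:ℝ))| := by
      rw [hsum]
      exact half_le_abs_half_add_int _
    have hchain : (1:ℝ)/2 ≤ X * D := by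
      calc (1:ℝ)/2 ≤ |(B:ℝ)*(w₁-v1-(m1:ℝ)) + (C:ℝ)*(w₂-v2-(m2:ℝ))| := h12
        _ ≤ |(B:ℝ)| * |w₁-v1-(m1:ℝ)| + |(C:ℝ)| * |w₂-v2-(m2:ℝ)| := by
            refine (abs_add_le _ _).trans ?_
            rw [abs_mul, abs_mul]
        _ ≤ |(B:ℝ)| * D + |(C:ℝ)| * D := by
            have u1 := mul_le_mul_of_nonneg_left hD1 (abs_nonneg (B:ℝ))
            have u2 := mul_le_mul_of_nonneg_left hD2 (abs_nonneg (C:ℝ))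
            linarith
        _ = X * D := by rw [hXdef]; ring
    have hDle : D ≤ 1/2^(n₀+1) := by rw [hDdef, ← hT]; exact hk
    have hfin : (2:ℝ)^(n₀+1) ≤ 2*X := by
      have h1 : 1/2 ≤ X * (1/2^(n₀+1)) := by
        refine hchain.trans ?_
        exact mul_le_mul_of_nonneg_left hDle hX.le
      rw [mul_one_div, le_div_iff₀ (by positivity)] at h1
      linarith
    linarith
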